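/- Assume g·∫_{p₀}^0 a(p)^{-3} dp < 1. If f : [p₀,0] → ℝ is twice continuously differentiable and satisfies λ²·(a³f')' = μ·a·f on [p₀,0], f(p₀) = 0, f'(p₀) = 1, and the boundary condition (g·λ⁴ + α·μ²)·f(0) = λ⁴·a(0)³·f'(0), then λ²·∫_{p₀}^0 a(p)·f(p)² dp < 2·α·μ·f(0)². -/

import Mathlib

open Real Set
open MeasureTheory

section AuxLemmas

/-- Cauchy–Schwarz for interval integrals of continuous functions. -/
lemma my_cauchy_schwarz (a b : ℝ) (hab : a ≤ b) (u v : ℝ → ℝ)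
    (hu : ContinuousOn u (Icc a b)) (hv : ContinuousOn v (Icc a b)) :
    (∫ x in a..b, u x * v x) ^ 2 ≤
      (∫ x in a..b, u x ^ 2) * (∫ x in a..b, v x ^ 2) := by
  have hI : uIcc a b = Icc a b := uIcc_of_le hab
  have hiu : IntervalIntegrable (fun x => u x ^ 2) volume a b :=
    ((hu.pow 2).mono hI.subset).intervalIntegrable
  have hiv : IntervalIntegrable (fun x => v x ^ 2) volume a b :=
    ((hv.pow 2).mono hI.subset).intervalIntegrable
  have hiuv : IntervalIntegrable (fun x => u x * v x) volume a b :=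
    ((hu.mul hv).mono hI.subset).intervalIntegrable
  set A := ∫ x in a..b, v x ^ 2
  set B := ∫ x in a..b, u x * v x
  set C := ∫ x in a..b, u x ^ 2
  have key : ∀ t : ℝ, 0 ≤ A * (t * t) + (2 * B) * t + C := by
    intro t
    have h0 : 0 ≤ ∫ x in a..b, (u x + t * v x) ^ 2 :=
      intervalIntegral.integral_nonneg hab (fun x _ => sq_nonneg _)
    have hexp : (∫ x in a..b, (u x + t * v x) ^ 2)
        = A * (t * t) + (2 * B) * t + C := by
      have : (fun x => (u x + t * v x) ^ 2)
          = fun x => t ^ 2 * v x ^ 2 + ((2 * t) * (u x * v x) + u x ^ 2) := by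
        funext x; ring
      rw [this, intervalIntegral.integral_add (hiv.const_mul _)
            ((hiuv.const_mul _).add hiu),
          intervalIntegral.integral_add (hiuv.const_mul _) hiu,
          intervalIntegral.integral_const_mul (t^2) (fun x => v x ^2),
          intervalIntegral.integral_const_mul (2*t) (fun x => u x * v x)]
      ring
    rw [hexp] at h0; linarith
  have hd := discrim_le_zero key
  rw [discrim] at hd
  nlinarith [hd]

/-- Positivity of the integral of a nonneg continuous function positive at the left endpoint. -/
lemma my_pos_int (p₀ : ℝ) (hp₀ : p₀ < 0) (h : ℝ → ℝ)
    (hc : ContinuousOn h (Icc p₀ 0))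
    (hnn : ∀ x ∈ Icc p₀ 0, 0 ≤ h x) (hpos : 0 < h p₀) :
    0 < ∫ x in p₀..(0:ℝ), h x := by
  obtain ⟨δ, hδ, hball⟩ : ∃ δ > 0, ∀ x ∈ Icc p₀ 0, dist x p₀ < δ → 0 < h x := by
    have hcw : ContinuousWithinAt h (Icc p₀ 0) p₀ := hc p₀ ⟨le_rfl, hp₀.le⟩
    have h2 : h ⁻¹' {y | 0 < y} ∈ nhdsWithin p₀ (Icc p₀ 0) :=
      hcw (lt_mem_nhds hpos)
    rw [Metric.mem_nhdsWithin_iff] at h2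
    obtain ⟨δ, hδ, hsub⟩ := h2
    exact ⟨δ, hδ, fun x hx hd => hsub ⟨Metric.mem_ball.2 hd, hx⟩⟩
  set c := min (p₀ + δ / 2) 0 with hc_def
  have hc1 : p₀ < c := lt_min (by linarith) hp₀
  have hc2 : c ≤ 0 := min_le_right _ _
  have hsub : Icc p₀ c ⊆ Icc p₀ 0 := Icc_subset_Icc le_rfl hc2
  have hpos' : ∀ x ∈ Ioo p₀ c, 0 < h x := by
    intro x hx
    refine hball x ⟨hx.1.le, hx.2.le.trans hc2⟩ ?_
    rw [Real.dist_eq, abs_of_pos (by linarith [hx.1])]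
    have : x < p₀ + δ / 2 := hx.2.trans_le (min_le_left _ _)
    linarith
  have hint1 : IntervalIntegrable h volume p₀ c :=
    (hc.mono ((uIcc_of_le hc1.le) ▸ hsub)).intervalIntegrable
  have hint2 : IntervalIntegrable h volume c 0 :=
    (hc.mono ((uIcc_of_le hc2) ▸ Icc_subset_Icc hc1.le le_rfl)).intervalIntegrable
  have h1 : 0 < ∫ x in p₀..c, h x :=
    intervalIntegral.intervalIntegral_pos_of_pos_on hint1 hpos' hc1
  have h2 : 0 ≤ ∫ x in c..(0:ℝ), h x :=
    intervalIntegral.integral_nonneg hc2 (fun x hx => hnn x ⟨hc1.le.trans hx.1, hx.2⟩)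
  have hadd := intervalIntegral.integral_add_adjacent_intervals hint1 hint2
  linarith [hadd]

end AuxLemmas

/-- Derivative within the interval [p₀, 0]. -/
noncomputable def dI (p₀ : ℝ) (f : ℝ → ℝ) : ℝ → ℝ :=
  derivWithin f (Set.Icc p₀ 0)

set_option maxHeartbeats 2000000 in
/-- Assume g·∫_{p₀}^0 a⁻³ < 1. If f solves λ²·(a³f')' = μ·a·f on [p₀,0] with
f(p₀) = 0, f'(p₀) = 1 and the boundary condition
(g·λ⁴ + α·μ²)·f(0) = λ⁴·a(0)³·f'(0), then
λ²·∫_{p₀}^0 a·f² < 2·α·μ·f(0)². -/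
theorem eigenfunction_integral_estimate
    (p₀ lam μ α g : ℝ) (hp₀ : p₀ < 0) (hlam : 0 < lam) (hμ : 0 < μ)
    (hα : 0 < α) (hg : 0 < g)
    (a : ℝ → ℝ) (ha : ContDiffOn ℝ 1 a (Icc p₀ 0))
    (hapos : ∀ p ∈ Icc p₀ 0, 0 < a p)
    (hcond : (g * ∫ p in p₀..(0:ℝ), (a p ^ 3)⁻¹) < 1)
    (f : ℝ → ℝ) (hf : ContDiffOn ℝ 2 f (Icc p₀ 0))
    (hfe : ∀ p ∈ Icc p₀ 0,
      lam ^ 2 * dI p₀ (fun q => a q ^ 3 * dI p₀ f q) p = μ * a p * f p)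
    (hf0 : f p₀ = 0) (hf'0 : dI p₀ f p₀ = 1)
    (hbc : (g * lam ^ 4 + α * μ ^ 2) * f 0 = lam ^ 4 * a 0 ^ 3 * dI p₀ f 0) :
    lam ^ 2 * (∫ p in p₀..(0:ℝ), a p * f p ^ 2) < 2 * α * μ * f 0 ^ 2 := by
  set S := Icc p₀ (0:ℝ) with hS_def
  have hle : p₀ ≤ 0 := hp₀.le
  have hUI : uIcc p₀ (0:ℝ) = S := uIcc_of_le hle
  have hUD : UniqueDiffOn ℝ S := uniqueDiffOn_Icc hp₀
  set f' := dI p₀ f with hf'_def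
  set w : ℝ → ℝ := fun q => a q ^ 3 * f' q with hw_def
  set w' := dI p₀ w with hw'_def
  -- continuity facts
  have hac : ContinuousOn a S := ha.continuousOn
  have hfc : ContinuousOn f S := hf.continuousOn
  have hf'cd : ContDiffOn ℝ 1 f' S := hf.derivWithin hUD (by norm_num)
  have hf'c : ContinuousOn f' S := hf'cd.continuousOn
  have hwcd : ContDiffOn ℝ 1 w S := (ha.pow 3).mul hf'cd
  have hwc : ContinuousOn w S := hwcd.continuousOn
  -- derivative facts
  have hfd : ∀ p ∈ S, HasDerivWithinAt f (f' p) S p := fun p hp =>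
    ((hf.differentiableOn (by norm_num)) p hp).hasDerivWithinAt
  have hwd : ∀ p ∈ S, HasDerivWithinAt w (w' p) S p := fun p hp =>
    ((hwcd.differentiableOn (by norm_num)) p hp).hasDerivWithinAt
  have hw'eq : ∀ p ∈ S, w' p = μ * a p * f p / lam ^ 2 := by
    intro p hp
    have := hfe p hp
    field_simp
    linarith [this]
  have hw'c : ContinuousOn w' S := by
    have : ContinuousOn (fun p => μ * a p * f p / lam ^ 2) S :=
      (((continuousOn_const.mul hac).mul hfc).div_const _)
    exact this.congr hw'eq
  -- FTC for f : f 0 = ∫ f'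
  have hf'int : IntervalIntegrable f' volume p₀ 0 :=
    (hf'c.mono hUI.subset).intervalIntegrable
  have hFTC : ∫ p in p₀..(0:ℝ), f' p = f 0 - f p₀ := by
    refine intervalIntegral.integral_eq_sub_of_hasDeriv_right_of_le hle hfc ?_ hf'int
    intro x hx
    exact (((hfd x ⟨hx.1.le, hx.2.le⟩).hasDerivAt
      (Icc_mem_nhds hx.1 hx.2)).hasDerivWithinAt)
  -- FTC for w * f
  have hG'int : IntervalIntegrable (fun p => w' p * f p + w p * f' p) volume p₀ 0 :=
    (((hw'c.mul hfc).add (hwc.mul hf'c)).mono hUI.subset).intervalIntegrable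
  have hIBP : ∫ p in p₀..(0:ℝ), (w' p * f p + w p * f' p) = w 0 * f 0 := by
    have := intervalIntegral.integral_eq_sub_of_hasDeriv_right_of_le hle
      (hwc.mul hfc)
      (f' := fun p => w' p * f p + w p * f' p)
      (fun x hx => by
        have hxS : x ∈ S := ⟨hx.1.le, hx.2.le⟩
        have hn : S ∈ nhds x := Icc_mem_nhds hx.1 hx.2
        exact (((hwd x hxS).hasDerivAt hn).mul
          ((hfd x hxS).hasDerivAt hn)).hasDerivWithinAt)
      hG'int
    rw [this, Pi.mul_apply, Pi.mul_apply, hf0]; ring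
  -- split the IBP integral
  set K := ∫ p in p₀..(0:ℝ), a p * f p ^ 2 with hK_def
  set I := ∫ p in p₀..(0:ℝ), a p ^ 3 * f' p ^ 2 with hI_def
  have hi1 : IntervalIntegrable (fun p => w' p * f p) volume p₀ 0 :=
    ((hw'c.mul hfc).mono hUI.subset).intervalIntegrable
  have hi2 : IntervalIntegrable (fun p => w p * f' p) volume p₀ 0 :=
    ((hwc.mul hf'c).mono hUI.subset).intervalIntegrable
  have hsplit : (∫ p in p₀..(0:ℝ), w' p * f p) + (∫ p in p₀..(0:ℝ), w p * f' p)
      = w 0 * f 0 := by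
    rw [← intervalIntegral.integral_add hi1 hi2]; exact hIBP
  have he1 : (∫ p in p₀..(0:ℝ), w' p * f p) = (μ / lam ^ 2) * K := by
    rw [hK_def, ← intervalIntegral.integral_const_mul (μ / lam ^ 2)
      (fun p => a p * f p ^ 2)]
    refine intervalIntegral.integral_congr ?_
    intro p hp
    rw [hUI] at hp
    show w' p * f p = μ / lam ^ 2 * (a p * f p ^ 2)
    rw [hw'eq p hp]; ring
  have he2 : (∫ p in p₀..(0:ℝ), w p * f' p) = I := by
    refine intervalIntegral.integral_congr ?_
    intro p hp
    simp only [hw_def]; ring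
  have hmain : μ * K + lam ^ 2 * I = lam ^ 2 * (a 0 ^ 3 * f' 0) * f 0 := by
    have hw0 : w 0 = a 0 ^ 3 * f' 0 := rfl
    have hkey : (μ / lam ^ 2) * K + I = (a 0 ^ 3 * f' 0) * f 0 := by
      rw [← he1, ← he2, hsplit, hw0]
    have hl : lam ^ 2 ≠ 0 := by positivity
    field_simp at hkey
    linear_combination hkey
  -- positivity of I
  have hIpos : 0 < I := by
    refine my_pos_int p₀ hp₀ _ ((hac.pow 3).mul (hf'c.pow 2)) ?_ ?_
    · intro x hx
      have := hapos x hx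
      positivity
    · have hp₀S : p₀ ∈ S := ⟨le_rfl, hle⟩
      have := hapos p₀ hp₀S
      rw [hf'0]
      positivity
  -- Cauchy–Schwarz : f 0 ^ 2 ≤ J * I
  set J := ∫ p in p₀..(0:ℝ), (a p ^ 3)⁻¹ with hJ_def
  have hCS : f 0 ^ 2 ≤ J * I := by
    set u : ℝ → ℝ := fun p => (Real.sqrt (a p ^ 3))⁻¹ with hu_def
    set v : ℝ → ℝ := fun p => Real.sqrt (a p ^ 3) * f' p with hv_def
    have hsq_pos : ∀ p ∈ S, 0 < Real.sqrt (a p ^ 3) := by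
      intro p hp
      have := hapos p hp
      exact Real.sqrt_pos.2 (by positivity)
    have huc : ContinuousOn u S := by
      refine ContinuousOn.inv₀ ((hac.pow 3).sqrt) ?_
      intro p hp; exact (hsq_pos p hp).ne'
    have hvc : ContinuousOn v S := ((hac.pow 3).sqrt).mul hf'c
    have hcs := my_cauchy_schwarz p₀ 0 hle u v huc hvc
    have huv : (∫ p in p₀..(0:ℝ), u p * v p) = f 0 := by
      have hcong : (∫ p in p₀..(0:ℝ), u p * v p) = ∫ p in p₀..(0:ℝ), f' p := by
        refine intervalIntegral.integral_congr ?_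
        intro p hp; rw [hUI] at hp
        show u p * v p = f' p
        simp only [hu_def, hv_def]
        rw [← mul_assoc, inv_mul_cancel₀ (hsq_pos p hp).ne', one_mul]
      rw [hcong, hFTC, hf0, sub_zero]
    have hu2 : (∫ p in p₀..(0:ℝ), u p ^ 2) = J := by
      refine intervalIntegral.integral_congr ?_
      intro p hp; rw [hUI] at hp
      have hap : 0 < a p := hapos p hp
      show u p ^ 2 = (a p ^ 3)⁻¹
      simp only [hu_def]
      rw [← Real.sqrt_inv, Real.sq_sqrt (by positivity)]
    have hv2 : (∫ p in p₀..(0:ℝ), v p ^ 2) = I := by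
      refine intervalIntegral.integral_congr ?_
      intro p hp; rw [hUI] at hp
      have hap : 0 < a p := hapos p hp
      show v p ^ 2 = a p ^ 3 * f' p ^ 2
      simp only [hv_def]
      rw [mul_pow, Real.sq_sqrt (by positivity)]
    rw [huv, hu2, hv2] at hcs
    exact hcs
  -- combine everything
  have hgI : g * f 0 ^ 2 < I := by
    have h1 : g * f 0 ^ 2 ≤ g * (J * I) := by nlinarith [hCS]
    have h2 : g * (J * I) < I := by nlinarith [hIpos, hcond]
    linarith
  -- boundary condition gives the final identity
  have hfinal : lam ^ 2 * μ * K + lam ^ 4 * I = (g * lam ^ 4 + α * μ ^ 2) * f 0 ^ 2 := by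
    have h2 : lam ^ 2 * (μ * K + lam ^ 2 * I) = lam ^ 2 * (lam ^ 2 * (a 0 ^ 3 * f' 0) * f 0) := by
      rw [hmain]
    calc lam ^ 2 * μ * K + lam ^ 4 * I = lam ^ 2 * (μ * K + lam ^ 2 * I) := by ring
      _ = lam ^ 2 * (lam ^ 2 * (a 0 ^ 3 * f' 0) * f 0) := h2
      _ = (lam ^ 4 * a 0 ^ 3 * f' 0) * f 0 := by ring
      _ = ((g * lam ^ 4 + α * μ ^ 2) * f 0) * f 0 := by rw [← hbc]
      _ = (g * lam ^ 4 + α * μ ^ 2) * f 0 ^ 2 := by ring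
  have h4 : lam ^ 4 * (g * f 0 ^ 2) < lam ^ 4 * I :=
    mul_lt_mul_of_pos_left hgI (by positivity)
  have h5 : lam ^ 2 * μ * K < α * μ ^ 2 * f 0 ^ 2 := by nlinarith [hfinal, h4]
  have h6 : 0 ≤ α * μ * f 0 ^ 2 := by positivity
  nlinarith [h5, h6, hμ]
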